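/- Let f₁, f₂ : ℝ → ℝ be nonnegative integrable functions symmetric about zero and strictly unimodal at zero, and fix 0 < u₁ < u₂. Then ∫_{-∞}^{∞} f₁(v) (f₂(u₂ - v) - f₂(v - u₁)) dv = ∫_0^{∞} [f₁((u₂+u₁)/2 - v) - f₁((u₂+u₁)/2 + v)] · [f₂((u₂-u₁)/2 + v) - f₂((u₂-u₁)/2 - v)] dv, and this quantity is negative. -/

import Mathlib

open MeasureTheory Set

private lemma habs_of_sym (f : ℝ → ℝ) (hsym : ∀ x, f (-x) = f x) (x : ℝ) :
    f |x| = f x := by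
  rcases abs_choice x with h | h
  · rw [h]
  · rw [h, hsym]

private lemma lt_of_abs_lt' (f : ℝ → ℝ) (hsym : ∀ x, f (-x) = f x)
    (hanti : StrictAntiOn f (Ici 0)) {x y : ℝ} (h : |x| < |y|) : f y < f x := by
  rw [← habs_of_sym f hsym x, ← habs_of_sym f hsym y]
  exact hanti (abs_nonneg x) (abs_nonneg y) h

private lemma le_of_abs_le' (f : ℝ → ℝ) (hsym : ∀ x, f (-x) = f x)
    (hanti : StrictAntiOn f (Ici 0)) {x y : ℝ} (h : |x| ≤ |y|) : f y ≤ f x := by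
  rw [← habs_of_sym f hsym x, ← habs_of_sym f hsym y]
  exact hanti.antitoneOn (abs_nonneg x) (abs_nonneg y) h

private lemma meas_of_sym (f : ℝ → ℝ) (hsym : ∀ x, f (-x) = f x)
    (hanti : StrictAntiOn f (Ici 0)) : Measurable f := by
  apply measurable_of_Ioi
  intro t
  have hoc : OrdConnected (f ⁻¹' Ioi t) := by
    constructor
    intro x hx y hy z hz
    rcases le_or_gt 0 z with hz0 | hz0
    · have habs : |z| ≤ |y| := by
        rw [abs_of_nonneg hz0]
        exact le_trans hz.2 (le_abs_self y)
      exact lt_of_lt_of_le hy (le_of_abs_le' f hsym hanti habs)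
    · have habs : |z| ≤ |x| := by
        rw [abs_of_neg hz0]
        exact le_trans (neg_le_neg hz.1) (neg_le_abs x)
      exact lt_of_lt_of_le hx (le_of_abs_le' f hsym hanti habs)
  exact hoc.measurableSet

/-- change-of-variables identity and negativity for the
difference of convolution values at `u₂` and `u₁`, for `0 < u₁ < u₂`. -/
theorem convolution_difference_identity_and_neg
    (f₁ f₂ : ℝ → ℝ)
    (hnn₁ : ∀ x, 0 ≤ f₁ x) (hnn₂ : ∀ x, 0 ≤ f₂ x)
    (hint₁ : Integrable f₁) (hint₂ : Integrable f₂)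
    (hsym₁ : ∀ x, f₁ (-x) = f₁ x) (hsym₂ : ∀ x, f₂ (-x) = f₂ x)
    (hmono₁ : StrictMonoOn f₁ (Iic 0)) (hanti₁ : StrictAntiOn f₁ (Ici 0))
    (hmono₂ : StrictMonoOn f₂ (Iic 0)) (hanti₂ : StrictAntiOn f₂ (Ici 0))
    (u₁ u₂ : ℝ) (hu₁ : 0 < u₁) (hu : u₁ < u₂) :
    (∫ v, f₁ v * (f₂ (u₂ - v) - f₂ (v - u₁))) =
      (∫ v in Ioi (0 : ℝ),
        (f₁ ((u₂ + u₁) / 2 - v) - f₁ ((u₂ + u₁) / 2 + v)) *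
          (f₂ ((u₂ - u₁) / 2 + v) - f₂ ((u₂ - u₁) / 2 - v))) ∧
    (∫ v, f₁ v * (f₂ (u₂ - v) - f₂ (v - u₁))) < 0 := by
  set m := (u₂ + u₁) / 2 with hm_def
  set d := (u₂ - u₁) / 2 with hd_def
  have hd : 0 < d := by rw [hd_def]; linarith
  have hm : 0 < m := by rw [hm_def]; linarith
  have hmd₂ : u₂ - m = d := by rw [hm_def, hd_def]; ring
  have hmd₁ : m - u₁ = d := by rw [hm_def, hd_def]; ring
  have hmeas₂ : Measurable f₂ := meas_of_sym f₂ hsym₂ hanti₂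
  -- boundedness of f₂
  have hb₂ : ∀ x, ‖f₂ x‖ ≤ f₂ 0 := fun x => by
    rw [Real.norm_of_nonneg (hnn₂ x)]
    exact le_of_abs_le' f₂ hsym₂ hanti₂ (by simp)
  -- integrability of the main integrand
  have hF : Integrable (fun v => f₁ v * (f₂ (u₂ - v) - f₂ (v - u₁))) := by
    have h1 : Integrable (fun v => f₂ (u₂ - v) * f₁ v) :=
      hint₁.bdd_mul ((hmeas₂.comp (measurable_const.sub measurable_id)).aestronglyMeasurable)
        (c := f₂ 0) (Filter.Eventually.of_forall fun v => hb₂ _)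
    have h2 : Integrable (fun v => f₂ (v - u₁) * f₁ v) :=
      hint₁.bdd_mul ((hmeas₂.comp (measurable_id.sub measurable_const)).aestronglyMeasurable)
        (c := f₂ 0) (Filter.Eventually.of_forall fun v => hb₂ _)
    exact (h1.sub h2).congr (Filter.Eventually.of_forall fun v => by
      simp only [Pi.sub_apply]; ring)
  -- shifted integrand
  set g : ℝ → ℝ := fun w => f₁ (m + w) * (f₂ (d - w) - f₂ (d + w)) with hg_def
  have hFg : ∀ w, f₁ (m + w) * (f₂ (u₂ - (m + w)) - f₂ (m + w - u₁)) = g w := by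
    intro w
    rw [hg_def]
    have e1 : u₂ - (m + w) = d - w := by rw [← hmd₂]; ring
    have e2 : m + w - u₁ = d + w := by rw [← hmd₁]; ring
    rw [e1, e2]
  have hg : Integrable g :=
    (hF.comp_add_left m).congr (Filter.Eventually.of_forall fun w => hFg w)
  have hgneg : Integrable (fun w => g (-w)) := hg.comp_neg
  -- the symmetrized integrand
  set h : ℝ → ℝ := fun w => (f₁ (m - w) - f₁ (m + w)) * (f₂ (d + w) - f₂ (d - w)) with hh_def
  have hgh : ∀ w, g (-w) + g w = h w := by
    intro w
    rw [hg_def, hh_def]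
    simp only [sub_neg_eq_add, ← sub_eq_add_neg]
    ring
  have hh : Integrable h :=
    (hgneg.add hg).congr (Filter.Eventually.of_forall fun w => hgh w)
  -- change of variables: shift by m
  have step1 : (∫ v, f₁ v * (f₂ (u₂ - v) - f₂ (v - u₁))) = ∫ w, g w := by
    rw [← integral_add_left_eq_self (μ := volume)
      (fun v => f₁ v * (f₂ (u₂ - v) - f₂ (v - u₁))) m]
    exact integral_congr_ae (Filter.Eventually.of_forall fun w => hFg w)
  -- split and fold the negative half-line
  have step2 : (∫ w, g w) = ∫ w in Ioi (0 : ℝ), h w := by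
    rw [← intervalIntegral.integral_Iic_add_Ioi (b := (0 : ℝ)) hg.integrableOn hg.integrableOn]
    have hfold : (∫ w in Iic (0 : ℝ), g w) = ∫ w in Ioi (0 : ℝ), g (-w) := by
      rw [integral_comp_neg_Ioi]; norm_num
    rw [hfold, ← integral_add hgneg.integrableOn hg.integrableOn]
    exact setIntegral_congr_fun measurableSet_Ioi fun w _ => hgh w
  -- pointwise strict negativity of h on Ioi 0
  have hneg : ∀ w ∈ Ioi (0 : ℝ), h w < 0 := by
    intro w hw
    have hw0 : 0 < w := hw
    have h1 : f₁ (m + w) < f₁ (m - w) := by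
      apply lt_of_abs_lt' f₁ hsym₁ hanti₁
      rw [abs_of_pos (by linarith : (0:ℝ) < m + w)]
      exact abs_lt.mpr ⟨by linarith, by linarith⟩
    have h2 : f₂ (d + w) < f₂ (d - w) := by
      apply lt_of_abs_lt' f₂ hsym₂ hanti₂
      rw [abs_of_pos (by linarith : (0:ℝ) < d + w)]
      exact abs_lt.mpr ⟨by linarith, by linarith⟩
    rw [hh_def]
    exact mul_neg_of_pos_of_neg (by linarith) (by linarith)
  -- strict negativity of the integral
  have hint_neg : (∫ w in Ioi (0 : ℝ), h w) < 0 := by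
    have hae : 0 ≤ᵐ[volume.restrict (Ioi (0 : ℝ))] fun w => -h w :=
      (ae_restrict_iff' measurableSet_Ioi).mpr
        (Filter.Eventually.of_forall fun w hw => le_of_lt (neg_pos.mpr (hneg w hw)))
    have hsupp : 0 < volume (Function.support (fun w => -h w) ∩ Ioi (0 : ℝ)) := by
      refine lt_of_lt_of_le ?_ (measure_mono fun w hw =>
        ⟨fun h0 => (ne_of_lt (neg_pos.mpr (hneg w hw))).symm h0, hw⟩)
      rw [Real.volume_Ioi]
      exact ENNReal.zero_lt_top
    have hpos : 0 < ∫ w in Ioi (0 : ℝ), -h w :=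
      (setIntegral_pos_iff_support_of_nonneg_ae hae hh.neg.integrableOn).mpr hsupp
    rw [integral_neg] at hpos
    linarith
  constructor
  · rw [step1, step2]
  · rw [step1, step2]
    exact hint_neg
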